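/- arXiv:2411.07166 — 9 statements merged into one kernel-verified Lean document; each statement's English description precedes it below -/
import Mathlib

section
/- Let (N, M, t) be a streaming problem and let v be the associated TU game defined for each S ⊆ N by v(S) = |{j ∈ M : L^j ⊆ S}|. Then for each artist i ∈ N, the Shapley value of i in the game (N, v) — i.e., (1/n!)·Σ_{π} [v(Pre(i,π) ∪ {i}) − v(Pre(i,π))], where the sum runs over all n! linear orders π of N and Pre(i,π) denotes the set of agents preceding i in π — equals Σ_{j ∈ M : t_{ij} > 0} 1/|L^j|. -/
open Finset

/-- A streaming problem: a finite nonempty set `N` of artists, a finite nonempty set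
`M` of users, and a streams matrix `t` such that every user streamed some content. -/
structure StreamingProblem where
  N : Finset ℕ
  M : Finset ℕ
  t : ℕ → ℕ → ℕ
  N_nonempty : N.Nonempty
  M_nonempty : M.Nonempty
  streams_pos : ∀ j ∈ M, 0 < ∑ i ∈ N, t i j

namespace StreamingProblem

/-- `L^j` : the set of artists streamed by user `j`. -/
def Lset (P : StreamingProblem) (j : ℕ) : Finset ℕ :=
  P.N.filter fun i => 0 < P.t i j

/-- `F_i` : the set of fans of artist `i`. -/
def Fset (P : StreamingProblem) (i : ℕ) : Finset ℕ :=
  P.M.filter fun j => 0 < P.t i j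

/-- The Shapley index: `Sh_i(N,M,t) = ∑_{j ∈ M : t_{ij} > 0} 1 / |L^j|`. -/
noncomputable def Sh (P : StreamingProblem) (i : ℕ) : ℝ :=
  ∑ j ∈ P.M.filter (fun j => 0 < P.t i j), (1 : ℝ) / ((P.Lset j).card : ℝ)

end StreamingProblem

open StreamingProblem

/-- The pessimistic TU game associated to a streaming problem:
`v(S)` is the number of users who only streamed artists in `S`. -/
def pessGame (P : StreamingProblem) (S : Finset ℕ) : ℕ :=
  (P.M.filter fun j => P.Lset j ⊆ S).card

section Counting

lemma cond_swap {α : Type} [DecidableEq α] {n : ℕ} (K : Finset α) {l l' : α}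
    (hl : l ∈ K) (hl' : l' ∈ K) (σ : Fin n ≃ α)
    (h : ∀ x ∈ K, σ.symm x ≤ σ.symm l) :
    ∀ x ∈ K, (σ.trans (Equiv.swap l l')).symm x ≤ (σ.trans (Equiv.swap l l')).symm l' := by
  intro x hx
  simp only [Equiv.symm_trans_apply, Equiv.symm_swap, Equiv.swap_apply_right]
  apply h
  rcases eq_or_ne x l with rfl | h1
  · rw [Equiv.swap_apply_left]; exact hl'
  rcases eq_or_ne x l' with rfl | h2
  · rw [Equiv.swap_apply_right]; exact hl
  · rw [Equiv.swap_apply_of_ne_of_ne h1 h2]; exact hx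

lemma fiber_card_eq {α : Type} [Fintype α] [DecidableEq α] {n : ℕ} (K : Finset α) {l l' : α}
    (hl : l ∈ K) (hl' : l' ∈ K) :
    (univ.filter fun σ : Fin n ≃ α => ∀ x ∈ K, σ.symm x ≤ σ.symm l).card
      = (univ.filter fun σ : Fin n ≃ α => ∀ x ∈ K, σ.symm x ≤ σ.symm l').card := by
  classical
  refine Finset.card_nbij' (fun σ => σ.trans (Equiv.swap l l'))
    (fun σ => σ.trans (Equiv.swap l l')) ?_ ?_ ?_ ?_
  · intro σ hσ
    simp only [coe_filter, Set.mem_setOf_eq, mem_filter, mem_univ, true_and] at hσ ⊢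
    exact cond_swap K hl hl' σ hσ
  · intro σ hσ
    simp only [coe_filter, Set.mem_setOf_eq, mem_filter, mem_univ, true_and] at hσ ⊢
    have := cond_swap K hl' hl σ hσ
    rwa [Equiv.swap_comm] at this
  · intro σ _
    simp only []; rw [Equiv.trans_assoc, Equiv.swap_swap, Equiv.trans_refl]
  · intro σ _
    simp only []; rw [Equiv.trans_assoc, Equiv.swap_swap, Equiv.trans_refl]

lemma count_last {α : Type} [Fintype α] [DecidableEq α] {n : ℕ} (hn : Fintype.card α = n)
    (K : Finset α) {l : α} (hl : l ∈ K) :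
    (univ.filter fun σ : Fin n ≃ α => ∀ x ∈ K, σ.symm x ≤ σ.symm l).card * K.card
      = n.factorial := by
  classical
  have hKne : K.Nonempty := ⟨l, hl⟩
  have hKne' : ∀ σ : Fin n ≃ α, (K.image σ.symm).Nonempty := fun σ => hKne.image _
  set f : (Fin n ≃ α) → α := fun σ => σ ((K.image σ.symm).max' (hKne' σ)) with hf
  have hmax : ∀ σ : Fin n ≃ α, σ.symm (f σ) = (K.image σ.symm).max' (hKne' σ) :=
    fun σ => σ.symm_apply_apply _
  have hfmem : ∀ σ, f σ ∈ K := by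
    intro σ
    obtain ⟨x, hx, hx2⟩ := mem_image.mp ((K.image σ.symm).max'_mem (hKne' σ))
    have : f σ = x := by rw [hf]; simp only; rw [← hx2, σ.apply_symm_apply]
    rwa [this]
  have hiff : ∀ b ∈ K, ∀ σ : Fin n ≃ α, f σ = b ↔ ∀ x ∈ K, σ.symm x ≤ σ.symm b := by
    intro b hb σ
    constructor
    · rintro rfl x hx
      rw [hmax]
      exact le_max' _ _ (mem_image_of_mem _ hx)
    · intro h
      refine σ.symm.injective (le_antisymm (h _ (hfmem σ)) ?_)
      rw [hmax]
      exact le_max' _ _ (mem_image_of_mem _ hb)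
  have htotal := Finset.card_eq_sum_card_fiberwise
    (s := (univ : Finset (Fin n ≃ α))) (t := K) (f := f) (fun σ _ => hfmem σ)
  have hc : (univ : Finset (Fin n ≃ α)).card = n.factorial := by
    have e : Fin n ≃ α := Fintype.equivOfCardEq (by simp [hn])
    rw [Finset.card_univ, Fintype.card_equiv e]
    simp
  rw [← hc, htotal]
  rw [Finset.sum_congr rfl (fun b hb => ?_), Finset.sum_const, smul_eq_mul, mul_comm]
  rw [Finset.filter_congr (fun σ _ => by simpa using hiff b hb σ)]
  exact fiber_card_eq K hb hl

end Counting

/-- The Shapley value of artist `i` in the pessimistic game, computed as the average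
over all `n!` linear orders of `N` of the marginal contribution of `i`, equals
`∑_{j ∈ M : t_{ij} > 0} 1/|L^j|`, the Shapley index. -/
theorem shapley_value_formula (P : StreamingProblem) (i : ℕ) (hi : i ∈ P.N) :
    (1 / (Nat.factorial P.N.card : ℝ)) *
      ∑ σ : Fin P.N.card ≃ {x // x ∈ P.N},
        (((pessGame P (insert i
            ((Finset.univ.filter fun a => a < σ.symm ⟨i, hi⟩).image fun a => (σ a).1))) : ℝ) -
          ((pessGame P
            ((Finset.univ.filter fun a => a < σ.symm ⟨i, hi⟩).image fun a => (σ a).1)) : ℝ))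
      = P.Sh i := by
  classical
  set n := P.N.card with hn
  set i' : {x // x ∈ P.N} := ⟨i, hi⟩ with hi'
  set Pre : (Fin n ≃ {x // x ∈ P.N}) → Finset ℕ :=
    fun σ => (Finset.univ.filter fun a => a < σ.symm i').image fun a => (σ a).1 with hPre
  have hmem : ∀ (σ : Fin n ≃ {x // x ∈ P.N}) (x : {x // x ∈ P.N}),
      x.1 ∈ Pre σ ↔ σ.symm x < σ.symm i' := by
    intro σ x
    simp only [hPre, mem_image, mem_filter, mem_univ, true_and]
    constructor
    · rintro ⟨a, ha, h2⟩
      have : σ a = x := Subtype.ext h2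
      rwa [← this, Equiv.symm_apply_apply]
    · intro h
      exact ⟨σ.symm x, h, by rw [Equiv.apply_symm_apply]⟩
  have hiPre : ∀ σ, i ∉ Pre σ := by
    intro σ h
    exact lt_irrefl _ ((hmem σ i').mp h)
  set K : ℕ → Finset {x // x ∈ P.N} := fun j => P.N.attach.filter fun x => 0 < P.t x.1 j with hKdef
  have hK : ∀ j (x : {x // x ∈ P.N}), x ∈ K j ↔ 0 < P.t x.1 j := by
    intro j x; simp [hKdef]
  have hKcard : ∀ j, (K j).card = (P.Lset j).card := by
    intro j
    refine Finset.card_nbij (fun x => x.1) ?_ ?_ ?_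
    · intro x hx
      exact mem_filter.mpr ⟨x.2, (hK j x).mp hx⟩
    · intro x _ y _ h
      exact Subtype.ext h
    · intro y hy
      simp only [Finset.coe_filter, Set.mem_setOf_eq, Lset, Finset.mem_filter] at hy
      exact ⟨⟨y, hy.1⟩, by simp [hKdef, hy.2], rfl⟩
  have hsubset : ∀ σ j, 0 < P.t i j →
      (P.Lset j ⊆ insert i (Pre σ) ↔ ∀ x ∈ K j, σ.symm x ≤ σ.symm i') := by
    intro σ j hij
    constructor
    · intro h x hx
      have hx' : x.1 ∈ P.Lset j := mem_filter.mpr ⟨x.2, (hK j x).mp hx⟩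
      rcases mem_insert.mp (h hx') with h1 | h1
      · have : x = i' := Subtype.ext h1
        rw [this]
      · exact le_of_lt ((hmem σ x).mp h1)
    · intro h y hy
      have hy1 : y ∈ P.N := (mem_filter.mp hy).1
      have hy2 : 0 < P.t y j := (mem_filter.mp hy).2
      have := h ⟨y, hy1⟩ ((hK j _).mpr hy2)
      rcases lt_or_eq_of_le this with h1 | h1
      · exact mem_insert_of_mem ((hmem σ ⟨y, hy1⟩).mpr h1)
      · have h2 : (⟨y, hy1⟩ : {x // x ∈ P.N}) = i' := σ.symm.injective h1
        exact mem_insert.mpr (Or.inl (congrArg Subtype.val h2))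
  have hnotsub : ∀ σ j, 0 < P.t i j → ¬ (P.Lset j ⊆ Pre σ) := by
    intro σ j hij h
    exact hiPre σ (h (mem_filter.mpr ⟨hi, hij⟩))
  have hnotin : ∀ σ j, ¬ 0 < P.t i j →
      (P.Lset j ⊆ insert i (Pre σ) ↔ P.Lset j ⊆ Pre σ) := by
    intro σ j hij
    have hiL : i ∉ P.Lset j := fun h => hij (mem_filter.mp h).2
    constructor
    · intro h x hx
      rcases mem_insert.mp (h hx) with h1 | h1
      · exact absurd (h1 ▸ hx) hiL
      · exact h1
    · intro h
      exact h.trans (subset_insert _ _)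
  have hmarg : ∀ σ : Fin n ≃ {x // x ∈ P.N},
      ((pessGame P (insert i (Pre σ)) : ℝ) - (pessGame P (Pre σ) : ℝ))
      = ∑ j ∈ P.M.filter (fun j => 0 < P.t i j),
          (if ∀ x ∈ K j, σ.symm x ≤ σ.symm i' then (1:ℝ) else 0) := by
    intro σ
    unfold pessGame
    rw [Finset.card_filter, Finset.card_filter]
    push_cast
    rw [← Finset.sum_sub_distrib,
      ← Finset.sum_filter_add_sum_filter_not P.M (fun j => 0 < P.t i j)]
    have h0 : ∑ j ∈ P.M.filter (fun j => ¬ 0 < P.t i j),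
        ((if P.Lset j ⊆ insert i (Pre σ) then (1:ℝ) else 0)
          - (if P.Lset j ⊆ Pre σ then (1:ℝ) else 0)) = 0 := by
      refine Finset.sum_eq_zero fun j hj => ?_
      have hij := (mem_filter.mp hj).2
      rw [if_congr (hnotin σ j hij) rfl rfl, sub_self]
    rw [h0, add_zero]
    refine Finset.sum_congr rfl fun j hj => ?_
    have hij := (mem_filter.mp hj).2
    rw [if_neg (hnotsub σ j hij), sub_zero, if_congr (hsubset σ j hij) rfl rfl]
  calc (1 / (Nat.factorial n : ℝ)) *
      ∑ σ : Fin n ≃ {x // x ∈ P.N},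
        ((pessGame P (insert i (Pre σ)) : ℝ) - (pessGame P (Pre σ) : ℝ))
      = (1 / (Nat.factorial n : ℝ)) * ∑ j ∈ P.M.filter (fun j => 0 < P.t i j),
          ∑ σ : Fin n ≃ {x // x ∈ P.N},
            (if ∀ x ∈ K j, σ.symm x ≤ σ.symm i' then (1:ℝ) else 0) := by
        rw [Finset.sum_congr rfl fun σ _ => hmarg σ, Finset.sum_comm]
    _ = ∑ j ∈ P.M.filter (fun j => 0 < P.t i j), (1 : ℝ) / ((P.Lset j).card : ℝ) := by
        rw [Finset.mul_sum]
        refine Finset.sum_congr rfl fun j hj => ?_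
        have hij := (mem_filter.mp hj).2
        have hiK : i' ∈ K j := (hK j i').mpr hij
        have hcount := count_last (Fintype.card_coe P.N) (K j) hiK
        rw [Finset.sum_ite, Finset.sum_const, Finset.sum_const_zero, add_zero,
          nsmul_eq_mul, mul_one]
        have hLpos : 0 < (P.Lset j).card := by
          rw [← hKcard j]
          exact Finset.card_pos.mpr ⟨i', hiK⟩
        have hfac : (Nat.factorial n : ℝ) ≠ 0 := Nat.cast_ne_zero.mpr (Nat.factorial_ne_zero n)
        have hLne : ((P.Lset j).card : ℝ) ≠ 0 := Nat.cast_ne_zero.mpr hLpos.ne'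
        have hcR : ((univ.filter fun σ : Fin n ≃ {x // x ∈ P.N} =>
            ∀ x ∈ K j, σ.symm x ≤ σ.symm i').card : ℝ) * ((P.Lset j).card : ℝ)
            = (Nat.factorial n : ℝ) := by
          rw [← hKcard j]
          exact_mod_cast hcount
        rw [one_div, inv_mul_eq_div, div_eq_div_iff hfac hLne, one_mul]
        exact hcR
    _ = P.Sh i := rfl
end

section
/- Let (N, M, t) be a streaming problem, let v be the pessimistic TU game defined for each S ⊆ N by v(S) = |{j ∈ M : L^j ⊆ S}|, and let v^o be the optimistic TU game defined for each S ⊆ N by v^o(S) = |⋃_{i∈S} F_i|. Then v^o is the dual of v: for every S ⊆ N, v(N) − v(N∖S) = v^o(S). -/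
open Finset

open StreamingProblem

/-- The optimistic TU game associated to a streaming problem:
`v^o(S) = |⋃_{i ∈ S} F_i|`, the number of users who streamed some artist in `S`. -/
def optGame (P : StreamingProblem) (S : Finset ℕ) : ℕ :=
  (S.biUnion fun i => P.Fset i).card

/-- The optimistic game is the dual of the pessimistic game:
for every `S ⊆ N`, `v(N) - v(N \ S) = v^o(S)`. -/
theorem optimistic_is_dual_of_pessimistic (P : StreamingProblem) :
    ∀ S ⊆ P.N, (pessGame P P.N : ℤ) - (pessGame P (P.N \ S) : ℤ) = (optGame P S : ℤ) := by
  intro S hS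
  classical
  have h1 : P.M.filter (fun j => P.Lset j ⊆ P.N) = P.M := by
    rw [filter_true_of_mem]
    intro j _
    exact filter_subset _ _
  have hopt : S.biUnion (fun i => P.Fset i) =
      P.M.filter (fun j => ∃ i ∈ S, 0 < P.t i j) := by
    ext j
    simp only [mem_biUnion, Fset, mem_filter]
    tauto
  have hpess : P.M.filter (fun j => P.Lset j ⊆ P.N \ S) =
      P.M.filter (fun j => ¬ ∃ i ∈ S, 0 < P.t i j) := by
    apply filter_congr
    intro j hj
    simp only [Lset, subset_iff, mem_filter, mem_sdiff, not_exists, not_and, eq_iff_iff]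
    constructor
    · intro h i hiS hti
      exact ((h ⟨hS hiS, hti⟩).2 hiS).elim
    · intro h i hi
      exact ⟨hi.1, fun hiS => h i hiS hi.2⟩
  have hsum := card_filter_add_card_filter_not
    (s := P.M) (p := fun j => ∃ i ∈ S, 0 < P.t i j)
  simp only [not_exists, not_and] at hsum hpess
  unfold pessGame optGame
  rw [h1, hpess, hopt]
  omega
end

section
/- An index I satisfies additivity, reasonable lower bound, equal global impact of users, and symmetry on fans if and only if there exists, for each finite set of artists N, a positive real number λ_N such that for every streaming problem (N, M, t) and every i ∈ N, I_i(N, M, t) = λ_N · Sh_i(N, M, t); in particular, the associated reward rule of such an I coincides with the Shapley index. -/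
open Finset

open StreamingProblem

/-- Additivity of an index. -/
def AdditiveIndex (I : StreamingProblem → ℕ → ℝ) : Prop :=
  ∀ P P₁ P₂ : StreamingProblem,
    P₁.N = P.N → P₂.N = P.N →
    P.M = P₁.M ∪ P₂.M → Disjoint P₁.M P₂.M →
    (∀ i ∈ P.N, ∀ j ∈ P₁.M, P.t i j = P₁.t i j) →
    (∀ i ∈ P.N, ∀ j ∈ P₂.M, P.t i j = P₂.t i j) →
    ∀ i ∈ P.N, I P i = I P₁ i + I P₂ i

/-- Reasonable lower bound of an index. -/
def ReasonableLowerBound (I : StreamingProblem → ℕ → ℝ) : Prop :=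
  ∀ P : StreamingProblem, ∀ C ⊆ P.M,
    (C.card : ℝ) ≤
      (∑ i ∈ P.N.filter (fun i => ∃ j ∈ C, 0 < P.t i j), I P i) * (P.M.card : ℝ) /
        ∑ k ∈ P.N, I P k

/-- Equal global impact of users of an index. -/
def EqualGlobalImpactUsers (I : StreamingProblem → ℕ → ℝ) : Prop :=
  ∀ P Q Q' : StreamingProblem, ∀ j ∈ P.M, ∀ j' ∈ P.M, j ≠ j' →
    Q.N = P.N → Q.M = P.M.erase j → Q.t = P.t →
    Q'.N = P.N → Q'.M = P.M.erase j' → Q'.t = P.t →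
    ∑ i ∈ Q.N, I Q i = ∑ i ∈ Q'.N, I Q' i

/-- Symmetry on fans of an index. -/
def SymmetryOnFans (I : StreamingProblem → ℕ → ℝ) : Prop :=
  ∀ P : StreamingProblem, ∀ i ∈ P.N, ∀ i' ∈ P.N,
    P.Fset i = P.Fset i' → I P i = I P i'

/-- Order preservation of an index. -/
def OrderPreservation (I : StreamingProblem → ℕ → ℝ) : Prop :=
  ∀ P : StreamingProblem, ∀ i ∈ P.N, ∀ i' ∈ P.N,
    (∀ j ∈ P.M, P.t i j ≤ P.t i' j) → I P i ≤ I P i'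

/-- Non-unilateral manipulability of an index. -/
def NonUnilateralManipulability (I : StreamingProblem → ℕ → ℝ) : Prop :=
  ∀ P P' : StreamingProblem, ∀ i ∈ P.N,
    P'.N = P.N → P'.M = P.M →
    P.Fset i = P'.Fset i →
    (∀ j ∈ P.M, P.t i j ≤ P'.t i j) →
    (∀ k ∈ P.N, k ≠ i → ∀ j ∈ P.M, P.t k j = P'.t k j) →
    I P' i ≤ I P i

/-- Null artists axiom of an index. -/
def NullArtists (I : StreamingProblem → ℕ → ℝ) : Prop :=
  ∀ P : StreamingProblem, ∀ i ∈ P.N, (∑ j ∈ P.M, P.t i j) = 0 → I P i = 0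

/-- Equal impact of artists of an index. -/
def EqualImpactArtists (I : StreamingProblem → ℕ → ℝ) : Prop :=
  ∀ P Q Q' : StreamingProblem, ∀ i ∈ P.N, ∀ i' ∈ P.N, i ≠ i' →
    Q.N = P.N.erase i' → Q.M = P.M → Q.t = P.t →
    Q'.N = P.N.erase i → Q'.M = P.M → Q'.t = P.t →
    I P i - I Q i = I P i' - I Q' i'

/-- An index assigns nonnegative reals to the artists, with positive total sum. -/
def IsIndex (I : StreamingProblem → ℕ → ℝ) : Prop :=
  ∀ P : StreamingProblem, (∀ i ∈ P.N, 0 ≤ I P i) ∧ 0 < ∑ i ∈ P.N, I P i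

/-- The reward rule `R^I` associated with an index `I`. -/
noncomputable def Reward (I : StreamingProblem → ℕ → ℝ) (P : StreamingProblem) (i : ℕ) : ℝ :=
  I P i * (P.M.card : ℝ) / ∑ k ∈ P.N, I P k



lemma Lset_nonempty (P : StreamingProblem) {j : ℕ} (hj : j ∈ P.M) : (P.Lset j).Nonempty := by
  by_contra h
  rw [Finset.not_nonempty_iff_eq_empty, Lset, Finset.filter_eq_empty_iff] at h
  have := P.streams_pos j hj
  have hz : ∑ i ∈ P.N, P.t i j = 0 := Finset.sum_eq_zero (fun i hi => Nat.eq_zero_of_not_pos (h hi))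
  omega

lemma sum_Sh (P : StreamingProblem) : ∑ i ∈ P.N, P.Sh i = (P.M.card : ℝ) := by
  unfold Sh
  simp_rw [Finset.sum_filter]
  rw [Finset.sum_comm]
  have : ∀ j ∈ P.M, (∑ i ∈ P.N, if 0 < P.t i j then (1:ℝ)/((P.Lset j).card) else 0) = 1 := by
    intro j hj
    rw [← Finset.sum_filter]
    have hc : (P.Lset j).card ≠ 0 := Finset.card_ne_zero_of_mem (Lset_nonempty P hj).choose_spec
    rw [show P.N.filter (fun i => 0 < P.t i j) = P.Lset j from rfl]
    rw [Finset.sum_const, nsmul_eq_mul]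
    field_simp
  rw [Finset.sum_congr rfl this]
  simp

lemma Sh_nonneg (P : StreamingProblem) (i : ℕ) : 0 ≤ P.Sh i :=
  Finset.sum_nonneg fun _ _ => by positivity

lemma sum_Sh_LC (P : StreamingProblem) (C : Finset ℕ) (hC : C ⊆ P.M) :
    (C.card : ℝ) ≤ ∑ i ∈ P.N.filter (fun i => ∃ j ∈ C, 0 < P.t i j), P.Sh i := by
  set LC := P.N.filter (fun i => ∃ j ∈ C, 0 < P.t i j) with hLC
  have h1 : ∀ i ∈ LC, (∑ j ∈ C, if 0 < P.t i j then (1:ℝ)/((P.Lset j).card) else 0) ≤ P.Sh i := by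
    intro i _
    unfold StreamingProblem.Sh
    rw [Finset.sum_filter]
    exact Finset.sum_le_sum_of_subset_of_nonneg hC (fun j _ _ => by positivity)
  refine le_trans ?_ (Finset.sum_le_sum h1)
  rw [Finset.sum_comm]
  have h2 : ∀ j ∈ C, (∑ i ∈ LC, if 0 < P.t i j then (1:ℝ)/((P.Lset j).card) else 0) = 1 := by
    intro j hj
    rw [← Finset.sum_filter]
    have hsub : LC.filter (fun i => 0 < P.t i j) = P.Lset j := by
      rw [hLC, Lset, Finset.filter_filter]
      refine Finset.filter_congr fun i _ => ?_
      exact ⟨fun h => h.2, fun h => ⟨⟨j, hj, h⟩, h⟩⟩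
    rw [hsub]
    have hc : (P.Lset j).card ≠ 0 := Finset.card_ne_zero_of_mem (Lset_nonempty P (hC hj)).choose_spec
    rw [Finset.sum_const, nsmul_eq_mul]
    field_simp
  rw [Finset.sum_congr rfl h2]
  simp

lemma Sh_eq_Fsum (P : StreamingProblem) (i : ℕ) :
    P.Sh i = ∑ j ∈ P.Fset i, (1 : ℝ) / ((P.Lset j).card : ℝ) := rfl

lemma Sh_add (P P₁ P₂ : StreamingProblem) (hN1 : P₁.N = P.N) (hN2 : P₂.N = P.N)
    (hM : P.M = P₁.M ∪ P₂.M) (hdis : Disjoint P₁.M P₂.M)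
    (ht1 : ∀ i ∈ P.N, ∀ j ∈ P₁.M, P.t i j = P₁.t i j)
    (ht2 : ∀ i ∈ P.N, ∀ j ∈ P₂.M, P.t i j = P₂.t i j)
    (i : ℕ) (hi : i ∈ P.N) : P.Sh i = P₁.Sh i + P₂.Sh i := by
  have hL1 : ∀ j ∈ P₁.M, P.Lset j = P₁.Lset j := by
    intro j hj; rw [Lset, Lset, hN1]
    exact Finset.filter_congr fun k hk => by rw [ht1 k (hN1 ▸ hk) j hj]
  have hL2 : ∀ j ∈ P₂.M, P.Lset j = P₂.Lset j := by
    intro j hj; rw [Lset, Lset, hN2]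
    exact Finset.filter_congr fun k hk => by rw [ht2 k (hN2 ▸ hk) j hj]
  unfold Sh
  rw [hM, Finset.filter_union,
    Finset.sum_union (Finset.disjoint_filter_filter hdis)]
  congr 1
  · refine Finset.sum_congr (Finset.filter_congr fun j hj => by rw [ht1 i hi j hj]) ?_
    intro j hj
    rw [hL1 j (Finset.mem_of_mem_filter j hj)]
  · refine Finset.sum_congr (Finset.filter_congr fun j hj => by rw [ht2 i hi j hj]) ?_
    intro j hj
    rw [hL2 j (Finset.mem_of_mem_filter j hj)]

section Back
variable (I : StreamingProblem → ℕ → ℝ) (lam : Finset ℕ → ℝ)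
  (hlam : ∀ N : Finset ℕ, 0 < lam N)
  (heq : ∀ P : StreamingProblem, ∀ i ∈ P.N, I P i = lam P.N * P.Sh i)


include heq in
lemma sum_I_eq (P : StreamingProblem) : ∑ i ∈ P.N, I P i = lam P.N * (P.M.card : ℝ) := by
  rw [Finset.sum_congr rfl (heq P), ← Finset.mul_sum, sum_Sh]

include hlam heq in
lemma back_add : AdditiveIndex I := by
  intro P P₁ P₂ hN1 hN2 hM hdis ht1 ht2 i hi
  rw [heq P i hi, heq P₁ i (hN1 ▸ hi), heq P₂ i (hN2 ▸ hi), hN1, hN2,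
    Sh_add P P₁ P₂ hN1 hN2 hM hdis ht1 ht2 i hi, mul_add]

include hlam heq in
lemma back_rlb : ∀ P : StreamingProblem, ∀ C ⊆ P.M,
    (C.card : ℝ) ≤
      (∑ i ∈ P.N.filter (fun i => ∃ j ∈ C, 0 < P.t i j), I P i) * (P.M.card : ℝ) /
        ∑ k ∈ P.N, I P k := by
  intro P C hC
  have hm : (0:ℝ) < P.M.card := by
    exact_mod_cast Finset.card_pos.mpr P.M_nonempty
  have hl := hlam P.N
  rw [sum_I_eq I lam heq P]
  have hsub : ∀ i ∈ P.N.filter (fun i => ∃ j ∈ C, 0 < P.t i j), I P i = lam P.N * P.Sh i :=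
    fun i hi => heq P i (Finset.mem_of_mem_filter i hi)
  rw [Finset.sum_congr rfl hsub, ← Finset.mul_sum]
  rw [show lam P.N * (∑ i ∈ P.N.filter (fun i => ∃ j ∈ C, 0 < P.t i j), P.Sh i) * (P.M.card : ℝ) /
      (lam P.N * (P.M.card : ℝ)) = ∑ i ∈ P.N.filter (fun i => ∃ j ∈ C, 0 < P.t i j), P.Sh i by
    field_simp]
  exact sum_Sh_LC P C hC

include hlam heq in
lemma back_egi : ∀ P Q Q' : StreamingProblem, ∀ j ∈ P.M, ∀ j' ∈ P.M, j ≠ j' →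
    Q.N = P.N → Q.M = P.M.erase j → Q.t = P.t →
    Q'.N = P.N → Q'.M = P.M.erase j' → Q'.t = P.t →
    ∑ i ∈ Q.N, I Q i = ∑ i ∈ Q'.N, I Q' i := by
  intro P Q Q' j hj j' hj' hne hQN hQM hQt hQ'N hQ'M hQ't
  rw [sum_I_eq I lam heq Q, sum_I_eq I lam heq Q', hQN, hQ'N, hQM, hQ'M,
    Finset.card_erase_of_mem hj, Finset.card_erase_of_mem hj']

include heq in
lemma back_sym : ∀ P : StreamingProblem, ∀ i ∈ P.N, ∀ i' ∈ P.N,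
    P.Fset i = P.Fset i' → I P i = I P i' := by
  intro P i hi i' hi' h
  rw [heq P i hi, heq P i' hi', Sh_eq_Fsum, Sh_eq_Fsum, h]

end Back

section Forward

variable (I : StreamingProblem → ℕ → ℝ)

lemma invar (hadd : AdditiveIndex I) (P P' : StreamingProblem) (hN : P'.N = P.N)
    (hM : P'.M = P.M) (ht : ∀ i ∈ P.N, ∀ j ∈ P.M, P.t i j = P'.t i j) :
    ∀ i ∈ P.N, I P i = I P' i := by
  obtain ⟨u, hu⟩ : ∃ u, u ∉ P.M := Infinite.exists_notMem_finset P.M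
  set Qt : ℕ → ℕ → ℕ := fun i j => if j = u then 1 else P.t i j with hQt
  have hstream : ∀ j ∈ insert u P.M, 0 < ∑ i ∈ P.N, Qt i j := by
    intro j hj
    rcases Finset.mem_insert.mp hj with h | h
    · subst h; simp [hQt, Finset.card_pos.mpr P.N_nonempty]
    · have hne : j ≠ u := fun he => hu (he ▸ h)
      simpa [hQt, hne] using P.streams_pos j h
  set Q : StreamingProblem := ⟨P.N, insert u P.M, Qt, P.N_nonempty,
    Finset.insert_nonempty _ _, hstream⟩ with hQ
  set R : StreamingProblem := ⟨P.N, {u}, Qt, P.N_nonempty, Finset.singleton_nonempty u,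
    fun j hj => hstream j (Finset.mem_insert.mpr (Or.inl (Finset.mem_singleton.mp hj)))⟩ with hR
  have hunion : Q.M = P.M ∪ R.M := by
    show insert u P.M = P.M ∪ {u}
    rw [Finset.union_comm, ← Finset.insert_eq]
  have hdis : Disjoint P.M R.M := Finset.disjoint_singleton_right.mpr hu
  have h1 := hadd Q P R rfl rfl hunion hdis
    (fun i _ j hj => by
      have hne : j ≠ u := fun he => hu (he ▸ hj)
      show Qt i j = P.t i j
      simp [hQt, hne])
    (fun i _ j hj => rfl)
  have h2 := hadd Q P' R (show P'.N = Q.N from hN) rfl (hM ▸ hunion) (hM ▸ hdis)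
    (fun i hi j hj => by
      have hjP : j ∈ P.M := hM ▸ hj
      have hne : j ≠ u := fun he => hu (he ▸ hjP)
      show Qt i j = P'.t i j
      simp only [hQt, if_neg hne]
      exact ht i hi j hjP)
    (fun i _ j hj => rfl)
  intro i hi
  have := h1 i hi
  have := h2 i hi
  linarith

lemma single_shape (hI : IsIndex I) (hrlb : ∀ P : StreamingProblem, ∀ C ⊆ P.M,
      (C.card : ℝ) ≤
        (∑ i ∈ P.N.filter (fun i => ∃ j ∈ C, 0 < P.t i j), I P i) * (P.M.card : ℝ) /
          ∑ k ∈ P.N, I P k)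
    (hsym : ∀ P : StreamingProblem, ∀ i ∈ P.N, ∀ i' ∈ P.N,
      P.Fset i = P.Fset i' → I P i = I P i')
    (P : StreamingProblem) (j : ℕ) (hM : P.M = {j}) (i : ℕ) (hi : i ∈ P.N) :
    I P i = if 0 < P.t i j then (∑ k ∈ P.N, I P k) / ((P.Lset j).card : ℝ) else 0 := by
  have hjM : j ∈ P.M := by rw [hM]; exact Finset.mem_singleton_self j
  have hA : (P.Lset j).Nonempty := Lset_nonempty P hjM
  have hT : 0 < ∑ k ∈ P.N, I P k := (hI P).2
  have hnn := (hI P).1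
  -- the filter set in RLB for C = {j} is Lset j
  have hfilt : P.N.filter (fun i => ∃ j' ∈ ({j} : Finset ℕ), 0 < P.t i j') = P.Lset j := by
    rw [Lset]
    refine Finset.filter_congr fun k _ => ?_
    simp
  have hrlb1 := hrlb P {j} (by rw [hM])
  rw [hfilt, hM] at hrlb1
  simp only [Finset.card_singleton, Nat.cast_one, mul_one] at hrlb1
  have hSA : (∑ k ∈ P.N, I P k) ≤ ∑ i' ∈ P.Lset j, I P i' := by
    have := (le_div_iff₀ hT).mp hrlb1
    linarith
  have hsplit : (∑ i' ∈ P.Lset j, I P i') +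
      ∑ i' ∈ P.N.filter (fun i' => ¬ 0 < P.t i' j), I P i' = ∑ k ∈ P.N, I P k :=
    Finset.sum_filter_add_sum_filter_not P.N _ _
  have hzero : ∀ i' ∈ P.N.filter (fun i' => ¬ 0 < P.t i' j), I P i' = 0 := by
    rw [← Finset.sum_eq_zero_iff_of_nonneg
      (fun i' hi' => hnn i' (Finset.mem_of_mem_filter i' hi'))]
    have h0 : 0 ≤ ∑ i' ∈ P.N.filter (fun i' => ¬ 0 < P.t i' j), I P i' :=
      Finset.sum_nonneg (fun i' hi' => hnn i' (Finset.mem_of_mem_filter i' hi'))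
    linarith
  have hSA' : ∑ i' ∈ P.Lset j, I P i' = ∑ k ∈ P.N, I P k := by
    rw [Finset.sum_congr rfl hzero] at hsplit
    simpa using hsplit
  by_cases hpos : 0 < P.t i j
  · rw [if_pos hpos]
    have hiA : i ∈ P.Lset j := Finset.mem_filter.mpr ⟨hi, hpos⟩
    -- all members of Lset j have I P · = I P i by symmetry on fans
    have hFs : ∀ i' ∈ P.Lset j, P.Fset i' = ({j} : Finset ℕ) := by
      intro i' hi'
      rw [Fset, hM]
      rw [Finset.filter_singleton, if_pos (Finset.mem_filter.mp hi').2]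
    have hconst : ∀ i' ∈ P.Lset j, I P i' = I P i := by
      intro i' hi'
      exact hsym P i' (Finset.mem_of_mem_filter i' hi') i hi
        (by rw [hFs i' hi', hFs i hiA])
    have hcardsum : ∑ i' ∈ P.Lset j, I P i' = ((P.Lset j).card : ℝ) * I P i := by
      rw [Finset.sum_congr rfl hconst, Finset.sum_const, nsmul_eq_mul]
    have hc : ((P.Lset j).card : ℝ) ≠ 0 := by
      exact_mod_cast Finset.card_ne_zero_of_mem hA.choose_spec
    rw [hcardsum] at hSA'
    field_simp
    linarith [hSA']
  · rw [if_neg hpos]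
    exact hzero i (Finset.mem_filter.mpr ⟨hi, hpos⟩)


def canonU (N : Finset ℕ) (hN : N.Nonempty) (u : ℕ) : StreamingProblem :=
  ⟨N, {u}, fun _ _ => 1, hN, Finset.singleton_nonempty u,
   fun j _ => by simpa using Finset.card_pos.mpr hN⟩

lemma total_eq_users_ne (hadd : AdditiveIndex I)
    (hegi : ∀ P Q Q' : StreamingProblem, ∀ j ∈ P.M, ∀ j' ∈ P.M, j ≠ j' →
      Q.N = P.N → Q.M = P.M.erase j → Q.t = P.t →
      Q'.N = P.N → Q'.M = P.M.erase j' → Q'.t = P.t →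
      ∑ i ∈ Q.N, I Q i = ∑ i ∈ Q'.N, I Q' i)
    (P P' : StreamingProblem) (j j' : ℕ) (hN : P'.N = P.N)
    (hMP : P.M = {j}) (hMP' : P'.M = {j'}) (hne : j ≠ j') :
    ∑ i ∈ P.N, I P i = ∑ i ∈ P'.N, I P' i := by
  have hjP : j ∈ P.M := by rw [hMP]; exact Finset.mem_singleton_self j
  have hj'P : j' ∈ P'.M := by rw [hMP']; exact Finset.mem_singleton_self j'
  set Wt : ℕ → ℕ → ℕ := fun i k => if k = j then P.t i k else P'.t i k with hWt
  have hstream : ∀ k ∈ insert j ({j'} : Finset ℕ), 0 < ∑ i ∈ P.N, Wt i k := by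
    intro k hk
    rcases Finset.mem_insert.mp hk with h | h
    · rw [h]; simpa [hWt] using P.streams_pos j hjP
    · rw [Finset.mem_singleton] at h
      rw [h]
      have hne' : j' ≠ j := hne.symm
      simpa [hWt, hne', hN] using P'.streams_pos j' hj'P
  set W : StreamingProblem := ⟨P.N, insert j {j'}, Wt, P.N_nonempty,
    Finset.insert_nonempty _ _, hstream⟩ with hW
  set Q : StreamingProblem := ⟨P.N, {j'}, Wt, P.N_nonempty, Finset.singleton_nonempty j',
    fun k hk => hstream k (Finset.mem_insert_of_mem hk)⟩ with hQ
  set Q' : StreamingProblem := ⟨P.N, {j}, Wt, P.N_nonempty, Finset.singleton_nonempty j,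
    fun k hk => hstream k (Finset.mem_insert.mpr (Or.inl (Finset.mem_singleton.mp hk)))⟩ with hQ'
  have hjW : j ∈ W.M := Finset.mem_insert_self j {j'}
  have hj'W : j' ∈ W.M := Finset.mem_insert_of_mem (Finset.mem_singleton_self j')
  have herase1 : Q.M = W.M.erase j := by
    show ({j'} : Finset ℕ) = ((insert j {j'} : Finset ℕ)).erase j
    rw [Finset.erase_insert (by simpa using hne)]
  have herase2 : Q'.M = W.M.erase j' := by
    show ({j} : Finset ℕ) = ((insert j {j'} : Finset ℕ)).erase j'
    rw [Finset.erase_insert_of_ne hne]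
    simp
  have hmain := hegi W Q Q' j hjW j' hj'W hne rfl herase1 rfl rfl herase2 rfl
  -- I Q' agrees with I P, I Q agrees with I P'
  have h1 : ∀ i ∈ P.N, I P i = I Q' i := by
    refine invar I hadd P Q' rfl (by rw [hMP]) ?_
    intro i _ k hk
    rw [hMP, Finset.mem_singleton] at hk
    show P.t i k = Wt i k
    rw [hk]; simp [hWt]
  have h2 : ∀ i ∈ P'.N, I P' i = I Q i := by
    refine invar I hadd P' Q (by rw [hN]) (by rw [hMP']) ?_
    intro i _ k hk
    rw [hMP', Finset.mem_singleton] at hk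
    show P'.t i k = Wt i k
    rw [hk]; simp [hWt, hne.symm]
  calc ∑ i ∈ P.N, I P i = ∑ i ∈ Q'.N, I Q' i := Finset.sum_congr rfl h1
    _ = ∑ i ∈ Q.N, I Q i := hmain.symm
    _ = ∑ i ∈ P'.N, I P' i := by
        show (∑ i ∈ P.N, I Q i) = ∑ i ∈ P'.N, I P' i
        rw [← hN]
        exact (Finset.sum_congr rfl h2).symm

noncomputable def lamI (N : Finset ℕ) : ℝ :=
  if h : N.Nonempty then ∑ i ∈ N, I (canonU N h 0) i else 1

lemma total_single (hadd : AdditiveIndex I)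
    (hegi : ∀ P Q Q' : StreamingProblem, ∀ j ∈ P.M, ∀ j' ∈ P.M, j ≠ j' →
      Q.N = P.N → Q.M = P.M.erase j → Q.t = P.t →
      Q'.N = P.N → Q'.M = P.M.erase j' → Q'.t = P.t →
      ∑ i ∈ Q.N, I Q i = ∑ i ∈ Q'.N, I Q' i)
    (P : StreamingProblem) (j : ℕ) (hM : P.M = {j}) :
    ∑ i ∈ P.N, I P i = lamI I P.N := by
  rw [lamI, dif_pos P.N_nonempty]
  by_cases hj0 : j = 0
  · subst hj0
    calc ∑ i ∈ P.N, I P i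
        = ∑ i ∈ (canonU P.N P.N_nonempty 1).N, I (canonU P.N P.N_nonempty 1) i :=
          total_eq_users_ne I hadd hegi P _ 0 1 rfl hM rfl (by omega)
      _ = ∑ i ∈ (canonU P.N P.N_nonempty 0).N, I (canonU P.N P.N_nonempty 0) i :=
          total_eq_users_ne I hadd hegi _ _ 1 0 rfl rfl rfl (by omega)
      _ = ∑ i ∈ P.N, I (canonU P.N P.N_nonempty 0) i := rfl
  · exact total_eq_users_ne I hadd hegi P _ j 0 rfl hM rfl hj0


lemma decomp (hI : IsIndex I) (hadd : AdditiveIndex I)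
    (hrlb : ∀ P : StreamingProblem, ∀ C ⊆ P.M,
      (C.card : ℝ) ≤
        (∑ i ∈ P.N.filter (fun i => ∃ j ∈ C, 0 < P.t i j), I P i) * (P.M.card : ℝ) /
          ∑ k ∈ P.N, I P k)
    (hegi : ∀ P Q Q' : StreamingProblem, ∀ j ∈ P.M, ∀ j' ∈ P.M, j ≠ j' →
      Q.N = P.N → Q.M = P.M.erase j → Q.t = P.t →
      Q'.N = P.N → Q'.M = P.M.erase j' → Q'.t = P.t →
      ∑ i ∈ Q.N, I Q i = ∑ i ∈ Q'.N, I Q' i)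
    (hsym : ∀ P : StreamingProblem, ∀ i ∈ P.N, ∀ i' ∈ P.N,
      P.Fset i = P.Fset i' → I P i = I P i') :
    ∀ n : ℕ, ∀ P : StreamingProblem, P.M.card = n → ∀ i ∈ P.N,
      I P i = ∑ j ∈ P.M,
        (if 0 < P.t i j then lamI I P.N / ((P.Lset j).card : ℝ) else 0) := by
  intro n
  induction n with
  | zero =>
    intro P hcard
    exact absurd (Finset.card_pos.mpr P.M_nonempty) (by omega)
  | succ n ih =>
    intro P hcard i hi
    obtain ⟨j, hj⟩ := P.M_nonempty
    by_cases hn : n = 0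
    · have hM : P.M = {j} := by
        obtain ⟨a, ha⟩ := Finset.card_eq_one.mp (by omega : P.M.card = 1)
        rw [ha] at hj ⊢
        rw [Finset.mem_singleton] at hj
        rw [hj]
      rw [hM, Finset.sum_singleton, single_shape I hI hrlb hsym P j hM i hi,
        total_single I hadd hegi P j hM]
    · have hcard2 : (P.M.erase j).card = n := by
        rw [Finset.card_erase_of_mem hj]; omega
      have hMe : (P.M.erase j).Nonempty := Finset.card_pos.mp (by omega)
      set P₂ : StreamingProblem := ⟨P.N, P.M.erase j, P.t, P.N_nonempty, hMe,
        fun k hk => P.streams_pos k (Finset.mem_of_mem_erase hk)⟩ with hP₂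
      set P₁ : StreamingProblem := ⟨P.N, {j}, P.t, P.N_nonempty, Finset.singleton_nonempty j,
        fun k hk => by
          rw [Finset.mem_singleton] at hk
          rw [hk]; exact P.streams_pos j hj⟩ with hP₁
      have hsplit := hadd P P₁ P₂ rfl rfl (by
          show P.M = {j} ∪ P.M.erase j
          rw [← Finset.insert_eq, Finset.insert_erase hj])
        (by
          show Disjoint ({j} : Finset ℕ) (P.M.erase j)
          exact Finset.disjoint_singleton_left.mpr (Finset.notMem_erase j P.M))
        (fun _ _ _ _ => rfl) (fun _ _ _ _ => rfl) i hi
      have hrec := ih P₂ hcard2 i hi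
      have h1 : I P₁ i = if 0 < P.t i j then lamI I P.N / ((P.Lset j).card : ℝ) else 0 := by
        rw [single_shape I hI hrlb hsym P₁ j rfl i hi, total_single I hadd hegi P₁ j rfl]
        rfl
      rw [hsplit, hrec, h1]
      have : ∀ k ∈ P.M.erase j,
          (if 0 < P₂.t i k then lamI I P₂.N / ((P₂.Lset k).card : ℝ) else 0) =
          (if 0 < P.t i k then lamI I P.N / ((P.Lset k).card : ℝ) else 0) := fun _ _ => rfl
      rw [Finset.sum_congr rfl this]
      exact Finset.add_sum_erase P.M
        (fun k => if 0 < P.t i k then lamI I P.N / ((P.Lset k).card : ℝ) else 0) hj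

end Forward

/-- Characterization of the Shapley index. -/
theorem shapley_characterization_2 (I : StreamingProblem → ℕ → ℝ) (hI : IsIndex I) :
    ((AdditiveIndex I ∧ ReasonableLowerBound I ∧ EqualGlobalImpactUsers I ∧ SymmetryOnFans I) ↔
      ∃ lam : Finset ℕ → ℝ, (∀ N : Finset ℕ, 0 < lam N) ∧
        ∀ P : StreamingProblem, ∀ i ∈ P.N, I P i = lam P.N * P.Sh i) ∧
    ((AdditiveIndex I ∧ ReasonableLowerBound I ∧ EqualGlobalImpactUsers I ∧ SymmetryOnFans I) →
      ∀ P : StreamingProblem, ∀ i ∈ P.N, Reward I P i = P.Sh i) := by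
  have hforward : (AdditiveIndex I ∧ ReasonableLowerBound I ∧ EqualGlobalImpactUsers I ∧
      SymmetryOnFans I) →
      ∃ lam : Finset ℕ → ℝ, (∀ N : Finset ℕ, 0 < lam N) ∧
        ∀ P : StreamingProblem, ∀ i ∈ P.N, I P i = lam P.N * P.Sh i := by
    rintro ⟨hadd, hrlb, hegi, hsym⟩
    refine ⟨lamI I, ?_, ?_⟩
    · intro N
      rw [lamI]
      split_ifs with h
      · exact (hI _).2
      · norm_num
    · intro P i hi
      rw [decomp I hI hadd hrlb hegi hsym P.M.card P rfl i hi, Sh_eq_Fsum, Fset,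
        Finset.mul_sum, ← Finset.sum_filter]
      exact Finset.sum_congr rfl fun j _ => by rw [mul_one_div]
  constructor
  · constructor
    · exact hforward
    · rintro ⟨lam, hlam, heq⟩
      exact ⟨back_add I lam hlam heq, back_rlb I lam hlam heq,
        back_egi I lam hlam heq, back_sym I lam heq⟩
  · intro h P i hi
    obtain ⟨lam, hlam, heq⟩ := hforward h
    rw [Reward, heq P i hi, sum_I_eq I lam heq P]
    have hm : ((P.M.card : ℝ)) ≠ 0 := by
      have := Finset.card_pos.mpr P.M_nonempty
      positivity
    have hl : lam P.N ≠ 0 := (hlam P.N).ne'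
    field_simp
end

section
/- The Shapley index satisfies equal impact of artists: for every streaming problem (N, M, t) and every pair of distinct artists i, i' ∈ N such that every user streams some artist other than i and some artist other than i' (so that the reduced triples are streaming problems), it holds that Sh_i(N, M, t) − Sh_i(N∖{i'}, M, t_{−i'}) = Sh_{i'}(N, M, t) − Sh_{i'}(N∖{i}, M, t_{−i}), where t_{−i} is t with the row of artist i removed. -/
open Finset

open StreamingProblem

lemma shapley_diff (P Q : StreamingProblem) (i i' : ℕ) (hi' : i' ∈ P.N)
    (hN : Q.N = P.N.erase i') (hM : Q.M = P.M) (ht : Q.t = P.t) :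
    Sh P i - Sh Q i =
      ∑ j ∈ P.M.filter (fun j => 0 < P.t i j ∧ 0 < P.t i' j),
        ((1:ℝ)/((P.Lset j).card : ℝ) - 1/(((P.Lset j).card : ℝ) - 1)) := by
  have hL : ∀ j, Q.Lset j = (P.Lset j).erase i' := by
    intro j
    simp [Lset, hN, ht, Finset.filter_erase]
  have hS : Q.M.filter (fun j => 0 < Q.t i j) = P.M.filter (fun j => 0 < P.t i j) := by
    rw [hM, ht]
  unfold Sh
  rw [hS, ← Finset.sum_sub_distrib,
    ← Finset.sum_filter_add_sum_filter_not (P.M.filter (fun j => 0 < P.t i j))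
      (fun j => 0 < P.t i' j)]
  have h2 : ∑ j ∈ (P.M.filter (fun j => 0 < P.t i j)).filter (fun j => ¬ 0 < P.t i' j),
      ((1:ℝ)/((P.Lset j).card : ℝ) - 1/((Q.Lset j).card : ℝ)) = 0 := by
    apply Finset.sum_eq_zero
    intro j hj
    simp only [Finset.mem_filter] at hj
    have hni : i' ∉ P.Lset j := by
      simp [Lset, hj.2]
    rw [hL, Finset.erase_eq_of_notMem hni]
    ring
  rw [h2, add_zero, Finset.filter_filter]
  apply Finset.sum_congr rfl
  intro j hj
  simp only [Finset.mem_filter] at hj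
  have hmem : i' ∈ P.Lset j := by
    simp [Lset, hi', hj.2.2]
  have hc : 1 ≤ (P.Lset j).card := Finset.card_pos.mpr ⟨i', hmem⟩
  rw [hL, Finset.card_erase_of_mem hmem, Nat.cast_sub hc, Nat.cast_one]

/-- The Shapley index satisfies equal impact of artists. -/
theorem shapley_equal_impact_artists : EqualImpactArtists StreamingProblem.Sh := by
  intro P Q Q' i hi i' hi' hne hQN hQM hQt hQ'N hQ'M hQ't
  rw [shapley_diff P Q i i' hi' hQN hQM hQt,
      shapley_diff P Q' i' i hi hQ'N hQ'M hQ't]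
  apply Finset.sum_congr _ (fun _ _ => rfl)
  apply Finset.filter_congr
  intro j _
  exact and_comm
end

section
/- The Shapley index satisfies order preservation: for every streaming problem (N, M, t) and every pair of artists i, i' ∈ N such that t_{ij} ≤ t_{i'j} for all j ∈ M, it holds that Sh_i(N, M, t) ≤ Sh_{i'}(N, M, t). -/
open Finset

open StreamingProblem

/-- The Shapley index satisfies order preservation. -/
theorem shapley_order_preservation : OrderPreservation StreamingProblem.Sh := by
  intro P i hi i' hi' h
  unfold StreamingProblem.Sh
  apply Finset.sum_le_sum_of_subset_of_nonneg
  · intro j hj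
    simp only [Finset.mem_filter] at *
    exact ⟨hj.1, lt_of_lt_of_le hj.2 (h j hj.1)⟩
  · intro j _ _
    positivity
end

section
/- The Shapley index satisfies non-unilateral manipulability: for streaming problems (N, M, t) and (N, M, t') and an artist i ∈ N such that F_i(N,M,t) = F_i(N,M,t'), t_{ij} ≤ t'_{ij} for all j ∈ M, and t_{kj} = t'_{kj} for all k ∈ N∖{i} and j ∈ M, it holds that Sh_i(N, M, t) ≥ Sh_i(N, M, t') (in fact with equality). -/
open Finset

open StreamingProblem

/-- The Shapley index satisfies non-unilateral manipulability (in fact with equality). -/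
theorem shapley_non_unilateral_manipulability :
    NonUnilateralManipulability StreamingProblem.Sh ∧
    (∀ P P' : StreamingProblem, ∀ i ∈ P.N,
      P'.N = P.N → P'.M = P.M →
      P.Fset i = P'.Fset i →
      (∀ j ∈ P.M, P.t i j ≤ P'.t i j) →
      (∀ k ∈ P.N, k ≠ i → ∀ j ∈ P.M, P.t k j = P'.t k j) →
      P.Sh i = P'.Sh i) := by
  
  have key : ∀ P P' : StreamingProblem, ∀ i ∈ P.N,
      P'.N = P.N → P'.M = P.M →
      P.Fset i = P'.Fset i →
      (∀ j ∈ P.M, P.t i j ≤ P'.t i j) →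
      (∀ k ∈ P.N, k ≠ i → ∀ j ∈ P.M, P.t k j = P'.t k j) →
      P.Sh i = P'.Sh i := by
    intro P P' i hi hN hM hF hle hk
    unfold StreamingProblem.Sh
    have hset : P.M.filter (fun j => 0 < P.t i j) = P'.M.filter (fun j => 0 < P'.t i j) := hF
    refine Finset.sum_congr hset ?_
    intro j hj
    rw [← hset] at hj
    have hjM : j ∈ P.M := (Finset.mem_filter.mp hj).1
    have hPt : 0 < P.t i j := (Finset.mem_filter.mp hj).2
    have hj' := hset ▸ hj
    have hPt' : 0 < P'.t i j := (Finset.mem_filter.mp hj').2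
    have hL : P.Lset j = P'.Lset j := by
      unfold StreamingProblem.Lset
      rw [hN]
      apply Finset.filter_congr
      intro k hkN
      by_cases hki : k = i
      · subst hki; simp [hPt, hPt']
      · rw [hk k hkN hki j hjM]
    rw [hL]
  exact ⟨fun P P' i hi hN hM hF hle hk => le_of_eq (key P P' i hi hN hM hF hle hk).symm, key⟩
end

section
/- The Shapley index does not satisfy pairwise homogeneity: there exist a streaming problem (N, M, t), artists i, i' ∈ N, and a positive natural number λ with t_{i'j} = λ·t_{ij} for all j ∈ M, such that Sh_{i'}(N, M, t) ≠ λ·Sh_i(N, M, t). (For instance, N = {1,2}, M = {a,b,c}, t_{1j} = 100 and t_{2j} = 200 for all j, λ = 2: then Sh_1 = Sh_2 = 3/2.) -/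
open Finset

open StreamingProblem

/-- The Shapley index does not satisfy pairwise homogeneity: there are a streaming
problem, artists `i, i'` and a positive natural `lam` with `t_{i'j} = lam * t_{ij}`
for all users `j`, yet `Sh_{i'} ≠ lam * Sh_i`. -/
theorem shapley_not_pairwise_homogeneous :
    ∃ (P : StreamingProblem) (i i' : ℕ) (lam : ℕ), i ∈ P.N ∧ i' ∈ P.N ∧ 0 < lam ∧
      (∀ j ∈ P.M, P.t i' j = lam * P.t i j) ∧ P.Sh i' ≠ (lam : ℝ) * P.Sh i := by
  set P : StreamingProblem :=
    ⟨{1, 2}, {0}, fun i _ => 100 * i, ⟨1, by decide⟩, ⟨0, by decide⟩, by decide⟩ with hP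
  refine ⟨P, 1, 2, 2, by decide, by decide, by decide, by decide, ?_⟩
  have hL : P.Lset 0 = {1, 2} := by decide
  have hF1 : P.M.filter (fun j => 0 < P.t 1 j) = {0} := by decide
  have hF2 : P.M.filter (fun j => 0 < P.t 2 j) = {0} := by decide
  have h1 : P.Sh 1 = 1 / 2 := by rw [Sh, hF1]; simp [hL]
  have h2 : P.Sh 2 = 1 / 2 := by rw [Sh, hF2]; simp [hL]
  rw [h1, h2]; norm_num
end

section
/- The user-centric index U, defined by U_i(N, M, t) = Σ_{j∈M} t_{ij}/T^j where T^j = Σ_{k∈N} t_{kj}, satisfies additivity, reasonable lower bound, and equal global impact of users, but does not satisfy symmetry on fans: there exist a streaming problem (N, M, t) and artists i, i' ∈ N with F_i = F_{i'} and U_i(N, M, t) ≠ U_{i'}(N, M, t). -/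
open Finset

open StreamingProblem

/-- The user-centric index: `U_i(N,M,t) = ∑_{j ∈ M} t_{ij} / T^j`. -/
noncomputable def userCentric (P : StreamingProblem) (i : ℕ) : ℝ :=
  ∑ j ∈ P.M, (P.t i j : ℝ) / ∑ k ∈ P.N, (P.t k j : ℝ)


lemma sum_userCentric (P : StreamingProblem) :
    ∑ i ∈ P.N, userCentric P i = (P.M.card : ℝ) := by
  unfold userCentric
  rw [Finset.sum_comm]
  have h : ∀ j ∈ P.M, ∑ i ∈ P.N, (P.t i j : ℝ) / ∑ k ∈ P.N, (P.t k j : ℝ) = 1 := by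
    intro j hj
    rw [← Finset.sum_div]
    apply div_self
    have hp := P.streams_pos j hj
    have : (0 : ℝ) < ∑ k ∈ P.N, (P.t k j : ℝ) := by exact_mod_cast hp
    linarith
  rw [Finset.sum_congr rfl h, Finset.sum_const, nsmul_eq_mul, mul_one]

def P0 : StreamingProblem where
  N := {0, 1}
  M := {0}
  t := fun i _ => i + 1
  N_nonempty := by simp
  M_nonempty := by simp
  streams_pos := by decide

/-- The user-centric index satisfies additivity, reasonable lower bound, and equal
global impact of users, but not symmetry on fans. -/
theorem userCentric_axioms :
    AdditiveIndex userCentric ∧ ReasonableLowerBound userCentric ∧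
    EqualGlobalImpactUsers userCentric ∧
    ∃ (P : StreamingProblem) (i i' : ℕ), i ∈ P.N ∧ i' ∈ P.N ∧
      P.Fset i = P.Fset i' ∧ userCentric P i ≠ userCentric P i' := by
  refine ⟨?_, ?_, ?_, ?_⟩
  · -- Additivity
    intro P P₁ P₂ hN1 hN2 hM hdisj ht1 ht2 i hi
    unfold userCentric
    rw [hM, Finset.sum_union hdisj]
    congr 1
    · apply Finset.sum_congr rfl
      intro j hj
      rw [ht1 i hi j hj, hN1]
      congr 1
      exact Finset.sum_congr rfl fun k hk => by rw [ht1 k (hN1 ▸ hk) j hj]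
    · apply Finset.sum_congr rfl
      intro j hj
      rw [ht2 i hi j hj, hN2]
      congr 1
      exact Finset.sum_congr rfl fun k hk => by rw [ht2 k (hN2 ▸ hk) j hj]
  · -- Reasonable lower bound
    intro P C hC
    set S := P.N.filter (fun i => ∃ j ∈ C, 0 < P.t i j) with hS
    have hm : (0 : ℝ) < (P.M.card : ℝ) := by
      exact_mod_cast Finset.card_pos.mpr P.M_nonempty
    have key : (C.card : ℝ) ≤ ∑ i ∈ S, userCentric P i := by
      unfold userCentric
      rw [Finset.sum_comm]
      have h1 : ∀ j ∈ C, ∑ i ∈ S, (P.t i j : ℝ) / ∑ k ∈ P.N, (P.t k j : ℝ) = 1 := by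
        intro j hj
        rw [← Finset.sum_div]
        have heq : ∑ i ∈ S, (P.t i j : ℝ) = ∑ i ∈ P.N, (P.t i j : ℝ) := by
          apply Finset.sum_subset (Finset.filter_subset _ _)
          intro i hi hni
          simp only [hS, Finset.mem_filter, not_and, not_exists] at hni
          have := hni hi
          by_contra h
          have hpos : 0 < P.t i j := Nat.pos_of_ne_zero (by exact_mod_cast h)
          exact this j hj hpos
        rw [heq]
        apply div_self
        have hp := P.streams_pos j (hC hj)
        have : (0 : ℝ) < ∑ k ∈ P.N, (P.t k j : ℝ) := by exact_mod_cast hp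
        linarith
      calc (C.card : ℝ) = ∑ j ∈ C, (1 : ℝ) := by simp
        _ = ∑ j ∈ C, ∑ i ∈ S, (P.t i j : ℝ) / ∑ k ∈ P.N, (P.t k j : ℝ) :=
            (Finset.sum_congr rfl h1).symm
        _ ≤ ∑ j ∈ P.M, ∑ i ∈ S, (P.t i j : ℝ) / ∑ k ∈ P.N, (P.t k j : ℝ) := by
            apply Finset.sum_le_sum_of_subset_of_nonneg hC
            intro j hj _
            apply Finset.sum_nonneg
            intro i _
            apply div_nonneg (Nat.cast_nonneg _) (Finset.sum_nonneg fun k _ => Nat.cast_nonneg _)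
    rw [sum_userCentric, mul_div_assoc, div_self (ne_of_gt hm), mul_one]
    exact key
  · -- Equal global impact of users
    intro P Q Q' j hj j' hj' hne hQN hQM hQt hQ'N hQ'M hQ't
    rw [sum_userCentric, sum_userCentric, hQM, hQ'M,
      Finset.card_erase_of_mem hj, Finset.card_erase_of_mem hj']
  · -- Not symmetry on fans
    refine ⟨P0, 0, 1, by simp [P0], by simp [P0], ?_, ?_⟩
    · simp [Fset, P0]
    · unfold userCentric
      norm_num [P0]
end

section
/- The equal-division index I², defined by I²_i(N, M, t) = m/n for every streaming problem (N, M, t) and every i ∈ N, satisfies additivity, equal global impact of users, symmetry on fans, order preservation, non-unilateral manipulability, and equal impact of artists, but does not satisfy reasonable lower bound: there exist a streaming problem (N, M, t) and a set of users C ⊆ M with Σ_{i∈L^C} I²_i(N, M, t)·m / Σ_{k∈N} I²_k(N, M, t) < |C|, where L^C = ⋃_{j∈C} L^j. -/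
open Finset

open StreamingProblem

/-- The equal-division index: `I²_i(N,M,t) = m / n`. -/
noncomputable def equalDivision (P : StreamingProblem) (_i : ℕ) : ℝ :=
  (P.M.card : ℝ) / (P.N.card : ℝ)

/-- The equal-division index satisfies additivity, equal global impact of users,
symmetry on fans, order preservation, non-unilateral manipulability, and equal
impact of artists, but not the reasonable lower bound. -/
theorem equalDivision_axioms :
    AdditiveIndex equalDivision ∧ EqualGlobalImpactUsers equalDivision ∧
    SymmetryOnFans equalDivision ∧ OrderPreservation equalDivision ∧
    NonUnilateralManipulability equalDivision ∧ EqualImpactArtists equalDivision ∧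
    ∃ (P : StreamingProblem) (C : Finset ℕ), C ⊆ P.M ∧
      (∑ i ∈ P.N.filter (fun i => ∃ j ∈ C, 0 < P.t i j), equalDivision P i) *
        (P.M.card : ℝ) / (∑ k ∈ P.N, equalDivision P k) < (C.card : ℝ) := by
  refine ⟨?_, ?_, ?_, ?_, ?_, ?_, ?_⟩
  · -- Additivity
    intro P P₁ P₂ hN₁ hN₂ hM hdisj _ _ i _
    unfold equalDivision
    rw [hN₁, hN₂, hM, card_union_of_disjoint hdisj]
    push_cast
    rw [add_div]
  · -- Equal global impact of users
    intro P Q Q' j hj j' hj' hne hQN hQM _ hQ'N hQ'M _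
    unfold equalDivision
    simp only [Finset.sum_const, nsmul_eq_mul]
    rw [hQN, hQ'N, hQM, hQ'M, card_erase_of_mem hj, card_erase_of_mem hj']
  · -- Symmetry on fans
    intro P i _ i' _ _; rfl
  · -- Order preservation
    intro P i _ i' _ _; exact le_refl _
  · -- Non-unilateral manipulability
    intro P P' i _ hN hM _ _ _
    unfold equalDivision
    rw [hN, hM]
  · -- Equal impact of artists
    intro P Q Q' i hi i' hi' hne hQN hQM _ hQ'N hQ'M _
    unfold equalDivision
    rw [hQN, hQM, hQ'N, hQ'M, card_erase_of_mem hi', card_erase_of_mem hi]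
  · -- Counterexample to reasonable lower bound
    refine ⟨⟨{0, 1}, {0}, fun i j => if i = 0 then 1 else 0,
      ⟨0, by decide⟩, ⟨0, by decide⟩, by decide⟩, {0}, subset_rfl, ?_⟩
    · have h1 : ({0, 1} : Finset ℕ).filter
          (fun i => ∃ j ∈ ({0} : Finset ℕ), 0 < if i = 0 then 1 else 0) = {0} := by
        decide
      simp only [h1]
      norm_num [equalDivision]
end
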